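/- Let D be a measurable subset of ℝ^d, let 𝓔 be a collection of admissible subsets of D, let E ∈ 𝓔 be fixed, let s ∈ (0,1/2], and let c, C > 0. Suppose that for every measurable f : D → [0,∞) taking only values in ℕ ∪ {0}, satisfying J(f,E',s) ≤ 1/2 for all E' ∈ 𝓔 and λ({x ∈ E : f(x) > 0}) ≤ (1/2)·λ(E), and for every α ≥ 0 and every real M > 0 with J(f,E',s) ≤ M for all E' ∈ 𝓔, one has λ({x ∈ E : f(x) > α}) ≤ C·λ(E)·exp(−c·α/M). Then for every measurable f : D → [0,∞) with λ({x ∈ E : f(x) > 0}) ≤ (1/2)·λ(E), every α ≥ 0, and every real M > 0 with J(f,E',s) ≤ M for all E' ∈ 𝓔, one has λ({x ∈ E : f(x) > α}) ≤ max{C, e^c}·λ(E)·exp(−(c/4)·α/M). -/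

import Mathlib

open MeasureTheory Set

/-- The John–Strömberg functional
`J(f,E,s) = inf_{c ∈ ℝ} inf {α ≥ 0 : μ({x ∈ E : |f(x) − c| > α}) < s·μ(E)}`. -/
noncomputable def JS {X : Type*} [MeasurableSpace X] (μ : Measure X)
    (f : X → ℝ) (E : Set X) (s : ℝ) : ℝ :=
  sInf {α : ℝ | 0 ≤ α ∧ ∃ c : ℝ, μ {x ∈ E | α < |f x - c|} < ENNReal.ofReal s * μ E}

/-- An admissible set: measurable with positive finite measure. -/
def Admissible {X : Type*} [MeasurableSpace X] (μ : Measure X) (E : Set X) : Prop :=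
  MeasurableSet E ∧ 0 < μ E ∧ μ E < ⊤

theorem stmt9 {d : ℕ} (D : Set (Fin d → ℝ)) (hD : MeasurableSet D)
    (𝓔 : Set (Set (Fin d → ℝ))) (h𝓔 : ∀ E ∈ 𝓔, Admissible volume E ∧ E ⊆ D)
    (E : Set (Fin d → ℝ)) (hE : E ∈ 𝓔)
    (s : ℝ) (hs : s ∈ Set.Ioc (0:ℝ) (1/2))
    (c C : ℝ) (hc : 0 < c) (hC : 0 < C)
    (hyp : ∀ f : (Fin d → ℝ) → ℝ, Measurable f →
      (∀ x ∈ D, 0 ≤ f x) → (∀ x ∈ D, ∃ n : ℕ, f x = n) →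
      (∀ E' ∈ 𝓔, JS volume f E' s ≤ 1/2) →
      volume {x ∈ E | 0 < f x} ≤ volume E / 2 →
      ∀ α : ℝ, 0 ≤ α → ∀ M : ℝ, 0 < M → (∀ E' ∈ 𝓔, JS volume f E' s ≤ M) →
        volume {x ∈ E | α < f x} ≤
          ENNReal.ofReal (C * Real.exp (-(c * α) / M)) * volume E) :
    ∀ f : (Fin d → ℝ) → ℝ, Measurable f → (∀ x ∈ D, 0 ≤ f x) →
      volume {x ∈ E | 0 < f x} ≤ volume E / 2 →
      ∀ α : ℝ, 0 ≤ α → ∀ M : ℝ, 0 < M → (∀ E' ∈ 𝓔, JS volume f E' s ≤ M) →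
        volume {x ∈ E | α < f x} ≤
          ENNReal.ofReal (max C (Real.exp c) * Real.exp (-((c / 4) * α) / M)) *
            volume E := by
  obtain ⟨hs0, hs2⟩ := hs
  intro f hf hfpos h0 α hα M hM hJS
  rcases le_or_gt α (4 * M) with hcase | hcase
  · -- small case : the factor is at least 1
    refine le_trans (measure_mono (fun x hx => hx.1)) ?_
    conv_lhs => rw [← one_mul (volume E)]
    refine mul_le_mul_left ?_ _
    rw [show (1 : ENNReal) = ENNReal.ofReal 1 by simp]
    apply ENNReal.ofReal_le_ofReal
    have h1 : Real.exp (-c) ≤ Real.exp (-((c / 4) * α) / M) := by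
      apply Real.exp_le_exp.mpr
      rw [neg_le, ← neg_div, neg_neg, div_le_iff₀ hM]
      nlinarith
    calc (1:ℝ) = Real.exp c * Real.exp (-c) := by rw [← Real.exp_add]; simp
      _ ≤ max C (Real.exp c) * Real.exp (-((c / 4) * α) / M) :=
        mul_le_mul (le_max_right _ _) h1 (Real.exp_pos _).le
          (le_trans hC.le (le_max_left _ _))
  · -- main case
    set M2 : ℝ := 4 * M / 3 with hM2def
    have hM2 : 0 < M2 := by positivity
    have hMM2 : M < M2 := by rw [hM2def]; linarith
    have h2M2 : 0 < 2 * M2 := by linarith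
    -- Step A: at level M2 > M there exists a good center for every E' ∈ 𝓔
    have key : ∀ E' ∈ 𝓔, ∃ c0 : ℝ,
        volume {x ∈ E' | M2 < |f x - c0|} < ENNReal.ofReal s * volume E' := by
      intro E' hE'
      obtain ⟨⟨hE'meas, hE'pos, hE'fin⟩, _⟩ := h𝓔 E' hE'
      set S : Set ℝ := {a : ℝ | 0 ≤ a ∧ ∃ c1 : ℝ,
          volume {x ∈ E' | a < |f x - c1|} < ENNReal.ofReal s * volume E'} with hSdef
      have hSb : BddBelow S := ⟨0, fun y hy => hy.1⟩
      have hSne : S.Nonempty := by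
        set A : ℕ → Set (Fin d → ℝ) := fun n => {x ∈ E' | (n:ℝ) < |f x - 0|} with hA
        have hAm : ∀ n, NullMeasurableSet (A n) volume := by
          intro n
          exact (hE'meas.inter
            (measurableSet_lt measurable_const (hf.sub measurable_const).abs)).nullMeasurableSet
        have hAanti : Antitone A := by
          intro n m hnm x hx
          exact ⟨hx.1, lt_of_le_of_lt (by exact_mod_cast Nat.cast_le.mpr hnm) hx.2⟩
        have hAfin : ∃ n, volume (A n) ≠ ⊤ :=
          ⟨0, (lt_of_le_of_lt (measure_mono (fun x hx => hx.1)) hE'fin).ne⟩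
        have hAiInter : (⋂ n, A n) = ∅ := by
          ext x
          simp only [Set.mem_iInter, Set.mem_empty_iff_false, iff_false]
          intro h
          obtain ⟨n, hn⟩ := exists_nat_gt (|f x - 0|)
          exact absurd (h n).2 (not_lt.mpr hn.le)
        have ht : Filter.Tendsto (volume ∘ A) Filter.atTop (nhds 0) := by
          have := tendsto_measure_iInter_atTop hAm hAanti hAfin
          rwa [hAiInter, measure_empty] at this
        have hpos : (0 : ENNReal) < ENNReal.ofReal s * volume E' :=
          ENNReal.mul_pos (ENNReal.ofReal_pos.mpr hs0).ne' hE'pos.ne'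
        obtain ⟨n, hn⟩ := (ht.eventually_lt_const hpos).exists
        exact ⟨(n : ℝ), ⟨Nat.cast_nonneg n, 0, hn⟩⟩
      have hlt : sInf S < M2 := lt_of_le_of_lt (hJS E' hE') hMM2
      obtain ⟨a, haS, haM2⟩ := (csInf_lt_iff hSb hSne).mp hlt
      obtain ⟨ha0, c0, hac⟩ := haS
      refine ⟨c0, lt_of_le_of_lt (measure_mono ?_) hac⟩
      exact fun x hx => ⟨hx.1, lt_trans haM2 hx.2⟩
    -- the integer-valued function g
    set g : (Fin d → ℝ) → ℝ := fun x => ((⌊f x / (2 * M2)⌋ : ℤ) : ℝ) with hgdef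
    have hgmeas : Measurable g := measurable_from_top.comp (hf.div_const _).floor
    have hgpos : ∀ x ∈ D, 0 ≤ g x := fun x hx =>
      Int.cast_nonneg_iff.mpr (Int.floor_nonneg.mpr (div_nonneg (hfpos x hx) h2M2.le))
    have hgnat : ∀ x ∈ D, ∃ n : ℕ, g x = n := by
      intro x hx
      have h : 0 ≤ ⌊f x / (2 * M2)⌋ := Int.floor_nonneg.mpr (div_nonneg (hfpos x hx) h2M2.le)
      refine ⟨(⌊f x / (2 * M2)⌋).toNat, ?_⟩
      show ((⌊f x / (2 * M2)⌋ : ℤ) : ℝ) = _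
      exact_mod_cast (Int.toNat_of_nonneg h).symm
    have hJSg : ∀ E' ∈ 𝓔, JS volume g E' s ≤ 1 / 2 := by
      intro E' hE'
      obtain ⟨c0, hc0⟩ := key E' hE'
      set k : ℤ := ⌊(c0 - M2) / (2 * M2)⌋ with hk
      have hsub : {x ∈ E' | 1/2 < |g x - ((k:ℝ) + 1/2)|} ⊆ {x ∈ E' | M2 < |f x - c0|} := by
        rintro x ⟨hxE, hxg⟩
        refine ⟨hxE, ?_⟩
        by_contra hle
        push_neg at hle
        obtain ⟨hl, hr⟩ := abs_le.mp hle
        have h1 : (c0 - M2) / (2 * M2) ≤ f x / (2 * M2) :=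
          (div_le_div_iff_of_pos_right h2M2).mpr (by linarith)
        have h2 : f x / (2 * M2) ≤ (c0 - M2) / (2 * M2) + 1 := by
          rw [div_add' _ _ _ h2M2.ne']
          exact (div_le_div_iff_of_pos_right h2M2).mpr (by linarith)
        have hfl1 : k ≤ ⌊f x / (2 * M2)⌋ := Int.floor_mono h1
        have hfl2 : ⌊f x / (2 * M2)⌋ ≤ k + 1 := by
          have := Int.floor_mono h2
          rwa [Int.floor_add_one] at this
        have hgx1 : (k : ℝ) ≤ g x := by
          show (k : ℝ) ≤ ((⌊f x / (2 * M2)⌋ : ℤ) : ℝ); exact_mod_cast hfl1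
        have hgx2 : g x ≤ (k : ℝ) + 1 := by
          show ((⌊f x / (2 * M2)⌋ : ℤ) : ℝ) ≤ (k : ℝ) + 1; exact_mod_cast hfl2
        have : |g x - ((k:ℝ) + 1/2)| ≤ 1/2 := abs_le.mpr ⟨by linarith, by linarith⟩
        linarith
      have hmem : (1/2 : ℝ) ∈ {a : ℝ | 0 ≤ a ∧ ∃ c1 : ℝ,
          volume {x ∈ E' | a < |g x - c1|} < ENNReal.ofReal s * volume E'} :=
        ⟨by norm_num, (k:ℝ) + 1/2, lt_of_le_of_lt (measure_mono hsub) hc0⟩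
      exact csInf_le ⟨0, fun y hy => hy.1⟩ hmem
    have h0g : volume {x ∈ E | 0 < g x} ≤ volume E / 2 := by
      refine le_trans (measure_mono ?_) h0
      rintro x ⟨hxE, hxg⟩
      refine ⟨hxE, ?_⟩
      have hxg' : (0 : ℝ) < ((⌊f x / (2 * M2)⌋ : ℤ) : ℝ) := hxg
      have h1 : (1 : ℤ) ≤ ⌊f x / (2 * M2)⌋ := by exact_mod_cast hxg'
      have h2 : (1 : ℝ) ≤ f x / (2 * M2) := by exact_mod_cast Int.le_floor.mp h1
      nlinarith [(one_le_div h2M2).mp h2]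
    set β : ℝ := α / (2 * M2) - 1 with hβdef
    have h2M2α : 2 * M2 ≤ α := by rw [hM2def]; linarith
    have hβ0 : 0 ≤ β := by
      rw [hβdef, sub_nonneg]
      exact (one_le_div h2M2).mpr h2M2α
    have main := hyp g hgmeas hgpos hgnat hJSg h0g β hβ0 (1/2) (by norm_num) hJSg
    have hsub2 : {x ∈ E | α < f x} ⊆ {x ∈ E | β < g x} := by
      rintro x ⟨hxE, hxf⟩
      refine ⟨hxE, ?_⟩
      have h1 : α / (2 * M2) < f x / (2 * M2) := (div_lt_div_iff_of_pos_right h2M2).mpr hxf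
      have h2 : f x / (2 * M2) - 1 < g x := by
        show _ < ((⌊f x / (2 * M2)⌋ : ℤ) : ℝ); exact_mod_cast Int.sub_one_lt_floor _
      rw [hβdef]; linarith
    refine le_trans (measure_mono hsub2) (le_trans main (mul_le_mul_left ?_ _))
    apply ENNReal.ofReal_le_ofReal
    have hexp : -(c * β) / (1/2) = (2*c - (c*α/M)/2) + (-((c / 4) * α) / M) := by
      rw [hβdef, hM2def]
      field_simp
      ring
    calc C * Real.exp (-(c * β) / (1/2))
        = (C * Real.exp (2*c - (c*α/M)/2)) * Real.exp (-((c / 4) * α) / M) := by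
          rw [hexp, Real.exp_add]; ring
      _ ≤ max C (Real.exp c) * Real.exp (-((c / 4) * α) / M) := by
          refine mul_le_mul_of_nonneg_right ?_ (Real.exp_pos _).le
          have h4 : 4 * c ≤ c * α / M := (le_div_iff₀ hM).mpr (by nlinarith)
          calc C * Real.exp (2*c - (c*α/M)/2) ≤ C * 1 :=
                mul_le_mul_of_nonneg_left
                  (Real.exp_le_one_iff.mpr (by linarith)) hC.le
            _ = C := mul_one C
            _ ≤ max C (Real.exp c) := le_max_left _ _
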